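/- Let $E$ be an exchange matrix whose associated normalized matrix $\Pi^{-1/2}E\Pi^{-1/2}$ is positive semi-definite. Then the diffusive distance $D^{\mathit{dif}}_{ij} = e_{ii}/f_i^2 + e_{jj}/f_j^2 - 2 e_{ij}/(f_i f_j)$ is a squared Euclidean distance, and its inertia with respect to weights $f$ equals $\frac12 \sum_{ij} f_i f_j D^{\mathit{dif}}_{ij} = \sum_i e_{ii}/f_i - 1$. -/

import Mathlib

open BigOperators Matrix

/-- For a positive semi-definite (diffusive) exchange matrix, the diffusive
distance is a squared Euclidean distance with inertia `∑_i e_{ii}/f_i - 1`. -/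
theorem diffusive_distance {n : ℕ}
    (E : Matrix (Fin n) (Fin n) ℝ) (hsym : E.IsSymm)
    (hnn : ∀ i j, 0 ≤ E i j) (hsum : ∑ i, ∑ j, E i j = 1)
    (f : Fin n → ℝ) (hf : ∀ i, f i = ∑ j, E i j) (hfpos : ∀ i, 0 < f i)
    (S : Matrix (Fin n) (Fin n) ℝ)
    (hS : S = Matrix.of fun i j => E i j / (Real.sqrt (f i) * Real.sqrt (f j)))
    (hpsd : S.PosSemidef)
    (D : Fin n → Fin n → ℝ)
    (hD : ∀ i j, D i j = E i i / (f i) ^ 2 + E j j / (f j) ^ 2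
      - 2 * (E i j / (f i * f j))) :
    (∃ (q : ℕ) (y : Fin n → EuclideanSpace ℝ (Fin q)),
      ∀ i j, D i j = ‖y i - y j‖ ^ 2) ∧
    (1 / 2) * ∑ i, ∑ j, f i * f j * D i j = (∑ i, E i i / f i) - 1 := by
  have hfne : ∀ i, f i ≠ 0 := fun i => (hfpos i).ne'
  constructor
  · -- Euclidean embedding
    set d : Fin n → ℝ := fun i => 1 / Real.sqrt (f i) with hd
    set M : Matrix (Fin n) (Fin n) ℝ :=
      Matrix.diagonal d * S * (Matrix.diagonal d)ᴴ with hM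
    have hMpsd : M.PosSemidef := hpsd.mul_mul_conjTranspose_same (Matrix.diagonal d)
    have hMentry : ∀ i j, M i j = E i j / (f i * f j) := by
      intro i j
      have hdt : (Matrix.diagonal d)ᴴ = Matrix.diagonal d := by
        simp [Matrix.diagonal_conjTranspose]
      rw [hM, hdt, Matrix.mul_diagonal, Matrix.diagonal_mul, hS]
      simp only [Matrix.of_apply, hd]
      rw [show f i = Real.sqrt (f i) * Real.sqrt (f i) from
            (Real.mul_self_sqrt (hfpos i).le).symm,
          show f j = Real.sqrt (f j) * Real.sqrt (f j) from
            (Real.mul_self_sqrt (hfpos j).le).symm]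
      have hi : Real.sqrt (f i) ≠ 0 := Real.sqrt_ne_zero'.mpr (hfpos i)
      have hj : Real.sqrt (f j) ≠ 0 := Real.sqrt_ne_zero'.mpr (hfpos j)
      field_simp
      rw [Real.sq_sqrt (sq_nonneg _), Real.sq_sqrt (sq_nonneg _)]
    open scoped MatrixOrder Matrix.Norms.L2Operator in
    obtain ⟨B, hB⟩ := CStarAlgebra.nonneg_iff_eq_star_mul_self.mp hMpsd.nonneg
    set y : Fin n → EuclideanSpace ℝ (Fin n) := fun i => WithLp.toLp 2 (fun k => B k i) with hy
    refine ⟨n, y, fun i j => ?_⟩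
    have hsub : y i - y j = (WithLp.toLp 2 (fun k => B k i - B k j) : EuclideanSpace ℝ (Fin n)) := rfl
    have hnorm : ‖y i - y j‖ ^ 2 = ∑ k, (B k i - B k j) ^ 2 := by
      rw [hsub, EuclideanSpace.norm_eq, Real.sq_sqrt (by positivity)]
      simp [Real.norm_eq_abs, sq_abs]
    have hMB : ∀ a b, M a b = ∑ k, B k a * B k b := by
      intro a b
      rw [hB]
      simp [Matrix.mul_apply, Matrix.conjTranspose_apply]
    have hii : E i i / (f i) ^ 2 = M i i := by rw [hMentry]; ring_nf
    have hjj : E j j / (f j) ^ 2 = M j j := by rw [hMentry]; ring_nf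
    have hij : E i j / (f i * f j) = M i j := (hMentry i j).symm
    rw [hD i j, hnorm, hii, hjj, hij, hMB, hMB, hMB,
      ← Finset.sum_add_distrib, Finset.mul_sum, ← Finset.sum_sub_distrib]
    exact Finset.sum_congr rfl fun k _ => by ring
  · -- inertia
    have hfsum : ∑ i, f i = 1 := by
      rw [← hsum]; exact Finset.sum_congr rfl fun i _ => hf i
    have h1 : ∀ i, E i i / f i ^ 2 * f i = E i i / f i := fun i => by
      rw [pow_two, ← div_div, div_mul_cancel₀ _ (hfne i)]
    have h2 : ∀ i j, E i j / (f i * f j) * (f i * f j) = E i j := fun i j =>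
      div_mul_cancel₀ _ (mul_ne_zero (hfne i) (hfne j))
    have key : ∀ i j, f i * f j * D i j
        = E i i / f i * f j + E j j / f j * f i - 2 * E i j := by
      intro i j
      calc f i * f j * D i j
          = (E i i / f i ^ 2 * f i) * f j + (E j j / f j ^ 2 * f j) * f i
            - 2 * (E i j / (f i * f j) * (f i * f j)) := by rw [hD i j]; ring
        _ = E i i / f i * f j + E j j / f j * f i - 2 * E i j := by
            rw [h1, h1, h2]
    have hmain : ∑ i, ∑ j, f i * f j * D i j
        = ∑ i, ∑ j, (E i i / f i * f j + E j j / f j * f i - 2 * E i j) :=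
      Finset.sum_congr rfl fun i _ => Finset.sum_congr rfl fun j _ => key i j
    have e1 : ∑ i : Fin n, ∑ j : Fin n, E i i / f i * f j = ∑ i, E i i / f i := by
      simp only [← Finset.mul_sum, hfsum, mul_one]
    have e2 : ∑ i : Fin n, ∑ j : Fin n, E j j / f j * f i = ∑ i, E i i / f i := by
      rw [Finset.sum_comm]
      simp only [← Finset.mul_sum, hfsum, mul_one]
    have e3 : ∑ i : Fin n, ∑ j : Fin n, 2 * E i j = 2 := by
      simp only [← Finset.mul_sum]
      rw [hsum, mul_one]
    rw [hmain]
    simp only [Finset.sum_sub_distrib, Finset.sum_add_distrib]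
    rw [show (∑ i : Fin n, ∑ j : Fin n, E i i / f i * f j)
          + ∑ i : Fin n, ∑ j : Fin n, E j j / f j * f i
        = (∑ i, E i i / f i) + (∑ i, E i i / f i) by rw [e1, e2], e3]
    ring
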